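/- Fix n ≥ 3 and let Γ ⊂ GL(n,ℝ) be the group of block matrices (A b; 0 1) with A ∈ GL(n−1,ℤ) and b ∈ ℤ^{n−1}. Then every nonzero x ∈ ℝⁿ has unbounded Γ-orbit, yet no element of Γ acts expansively on ℝⁿ (since 1 is an eigenvalue of every γ ∈ Γ). -/

import Mathlib

open scoped Matrix

lemma aux_unbounded_of_affine {ι : Type*} [Fintype ι] (S : Set (ι → ℝ)) (p : ι) (a c : ℝ)
    (hc : c ≠ 0) (h : ∀ k : ℤ, ∃ y ∈ S, y p = a + (k : ℝ) * c) :
    ¬ Bornology.IsBounded S := by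
  rw [isBounded_iff_forall_norm_le]
  rintro ⟨C, hC⟩
  obtain ⟨N, hN⟩ := exists_nat_gt ((C + |a|) / |c|)
  obtain ⟨y, hyS, hyp⟩ := h (N : ℤ)
  have h1 : |y p| ≤ C := le_trans (norm_le_pi_norm y p) (hC y hyS)
  have h2 : |(N : ℝ) * c| ≤ |y p| + |a| := by
    calc |(N : ℝ) * c| = |y p + (-a)| := by rw [hyp]; congr 1; push_cast; ring
    _ ≤ |y p| + |(-a)| := abs_add_le _ _
    _ = |y p| + |a| := by rw [abs_neg]
  have h3 : C + |a| < (N : ℝ) * |c| := by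
    rwa [div_lt_iff₀ (abs_pos.2 hc)] at hN
  rw [abs_mul, abs_of_nonneg (Nat.cast_nonneg N)] at h2
  linarith

/-- Fix `n = m + 1 ≥ 3` and let `Γ ⊂ GL(n, ℝ)` be the group of block
matrices `(A b; 0 1)` with `A ∈ GL(m, ℤ)` and `b ∈ ℤᵐ` (indexing `ℝⁿ` by `Fin m ⊕ Unit`).
Then every nonzero `x ∈ ℝⁿ` has unbounded `Γ`-orbit, yet no element of `Γ` acts
expansively on `ℝⁿ` (expansiveness of a single invertible matrix `M` meaning that the
cyclic group `{Mᵏ : k ∈ ℤ}` acts expansively). -/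
theorem affine_integer_group_orbits_unbounded_but_no_expansive_element
    {m : ℕ} (hm : 2 ≤ m)
    (Γ : Set (Matrix (Fin m ⊕ Unit) (Fin m ⊕ Unit) ℝ))
    (hΓ : Γ = {M | ∃ (A : Matrix (Fin m) (Fin m) ℤ) (b : Fin m → ℤ), IsUnit A.det ∧
      M = Matrix.fromBlocks (A.map (Int.cast : ℤ → ℝ))
        (fun i (_ : Unit) => (b i : ℝ)) 0 1}) :
    (∀ x : Fin m ⊕ Unit → ℝ, x ≠ 0 →
        ¬ Bornology.IsBounded {y : Fin m ⊕ Unit → ℝ | ∃ M ∈ Γ, y = M *ᵥ x}) ∧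
      (∀ M ∈ Γ, ¬ ∃ U ∈ nhds (0 : Fin m ⊕ Unit → ℝ), ∀ v : Fin m ⊕ Unit → ℝ,
        (∀ k : ℤ, (M ^ k) *ᵥ v ∈ U) → v = 0) := by
  subst hΓ
  constructor
  · intro x hx
    by_cases htz : x (Sum.inr ()) = 0
    · have hex : ∃ i, x (Sum.inl i) ≠ 0 := by
        by_contra h; push_neg at h
        apply hx; funext p
        cases p with
        | inl i => exact h i
        | inr w => cases w; exact htz
      obtain ⟨i, hi⟩ := hex
      haveI : Nontrivial (Fin m) := ⟨⟨⟨0, by omega⟩, ⟨1, by omega⟩, by simp [Fin.ext_iff]⟩⟩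
      obtain ⟨j, hj⟩ := exists_ne i
      apply aux_unbounded_of_affine _ (Sum.inl j) (x (Sum.inl j)) (x (Sum.inl i)) hi
      intro k
      refine ⟨_, ⟨_, ⟨Matrix.transvection j i k, 0,
        ⟨by rw [Matrix.det_transvection_of_ne j i hj k]; exact isUnit_one, rfl⟩⟩, rfl⟩, ?_⟩
      erw [Matrix.fromBlocks_mulVec]
      simp [Matrix.mulVec, dotProduct, Matrix.transvection, Matrix.single,
        Matrix.one_apply, Matrix.add_apply, add_mul, Finset.sum_add_distrib,
        Finset.sum_ite_eq, Finset.sum_ite_eq', mul_comm]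
    · apply aux_unbounded_of_affine _ (Sum.inl ⟨0, by omega⟩) (x (Sum.inl ⟨0, by omega⟩))
        (x (Sum.inr ())) htz
      intro k
      refine ⟨_, ⟨_, ⟨1, fun _ => k, ⟨by simp, rfl⟩⟩, rfl⟩, ?_⟩
      erw [Matrix.fromBlocks_mulVec]
      simp [Matrix.mulVec, dotProduct, Matrix.one_apply, Finset.sum_ite_eq, mul_comm]
  · rintro M ⟨A, b, hA, rfl⟩ ⟨U, hU, hexp⟩
    set MM : Matrix (Fin m ⊕ Unit) (Fin m ⊕ Unit) ℝ :=
      Matrix.fromBlocks (A.map (Int.cast : ℤ → ℝ)) (fun i (_ : Unit) => (b i : ℝ)) 0 1 with hMM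
    have hdet0 : (MM - 1).det = 0 := by
      apply Matrix.det_eq_zero_of_row_eq_zero (Sum.inr ())
      intro q
      cases q with
      | inl i => simp [hMM, Matrix.one_apply, Matrix.fromBlocks]
      | inr w => cases w; simp [hMM, Matrix.one_apply, Matrix.fromBlocks]
    obtain ⟨v, hv0, hv⟩ := Matrix.exists_mulVec_eq_zero_iff.2 hdet0
    have hfix : MM *ᵥ v = v := by
      rwa [Matrix.sub_mulVec, Matrix.one_mulVec, sub_eq_zero] at hv
    have hdetM : IsUnit MM.det := by
      rw [hMM]; erw [Matrix.det_fromBlocks_zero₂₁]; rw [ Matrix.det_one, mul_one]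
      have h2 : (A.map (Int.cast : ℤ → ℝ)).det = ((A.det : ℤ) : ℝ) :=
        (RingHom.map_det (Int.castRingHom ℝ) A).symm
      rw [h2]
      exact hA.map (Int.castRingHom ℝ)
    have hnat : ∀ n : ℕ, (MM ^ n) *ᵥ v = v := by
      intro n; induction n with
      | zero => simp
      | succ n ih => rw [pow_succ, ← Matrix.mulVec_mulVec, hfix, ih]
    have hzfix : ∀ k : ℤ, (MM ^ k) *ᵥ v = v := by
      intro k
      match k with
      | (n : ℕ) => rw [zpow_natCast]; exact hnat n
      | Int.negSucc n =>
        rw [zpow_negSucc]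
        have hud : IsUnit (MM ^ (n + 1)).det := by
          rw [Matrix.det_pow]; exact hdetM.pow _
        calc (MM ^ (n + 1))⁻¹ *ᵥ v = (MM ^ (n + 1))⁻¹ *ᵥ ((MM ^ (n + 1)) *ᵥ v) := by
              rw [hnat (n + 1)]
          _ = ((MM ^ (n + 1))⁻¹ * MM ^ (n + 1)) *ᵥ v := Matrix.mulVec_mulVec _ _ _
          _ = v := by rw [Matrix.nonsing_inv_mul _ hud, Matrix.one_mulVec]
    have hcont : Filter.Tendsto (fun c : ℝ => c • v) (nhds 0) (nhds 0) := by
      have hc : Continuous fun c : ℝ => c • v := continuous_id.smul continuous_const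
      simpa using hc.tendsto 0
    have h1 : ∀ᶠ c in nhds (0 : ℝ), c • v ∈ U := hcont hU
    have h2 : ∀ᶠ c in nhdsWithin (0 : ℝ) {(0 : ℝ)}ᶜ, c • v ∈ U := h1.filter_mono nhdsWithin_le_nhds
    obtain ⟨c, hcU, hc0⟩ := (h2.and self_mem_nhdsWithin).exists
    have : c • v = 0 := hexp (c • v) (fun k => by rw [Matrix.mulVec_smul, hzfix k]; exact hcU)
    rcases smul_eq_zero.1 this with h | h
    · exact hc0 h
    · exact hv0 h
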